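/- Let λ be a partition and let b be a semistandard Young tableau of shape λ with entries in the positive integers such that the set S_b = {μ partition : b is μ-distinguished} is nonempty. Then S_b has a unique minimal element μ_b for the order ≤_⊞, and S_b = μ_b + 𝒫^{⊞}, i.e. S_b = {μ_b + κ : κ ∈ 𝒫^{⊞}}. Moreover, for any μ ∈ S_b one has μ_b = μ^{⊞}. -/
import Mathlib


open scoped Classical

noncomputable section

namespace GE

/-- The coefficient of the `i`-th fundamental weight (`i ≥ 1`) in the dominant weight
corresponding to the partition `μ`: the number of columns of the Young diagram of `μ`
of height exactly `i`. -/
def coord (μ : YoungDiagram) (i : ℕ) : ℕ := μ.rowLen (i - 1) - μ.rowLen i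

/-- The Japanese reading word of a semistandard Young tableau: columns are read from right
to left, each column from top to bottom. -/
def jword {μ : YoungDiagram} (T : SemistandardYoungTableau μ) : List ℕ :=
  (((List.range (μ.rowLen 0)).reverse).map fun j =>
    (List.range (μ.colLen j)).map fun i => T i j).flatten

/-- The crystal statistic `ε_i` of a word, via the bracketing rule. -/
def wordEps (i : ℕ) (w : List ℕ) : ℕ :=
  (Finset.range (w.length + 1)).sup fun k => (w.take k).count (i + 1) - (w.take k).count i

/-- The crystal statistic `φ_i` of a word, via the bracketing rule. -/
def wordPhi (i : ℕ) (w : List ℕ) : ℕ :=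
  (Finset.range (w.length + 1)).sup fun k => (w.drop k).count i - (w.drop k).count (i + 1)

/-- The crystal statistic `ε_i` of a semistandard tableau. -/
def eps (i : ℕ) {μ : YoungDiagram} (T : SemistandardYoungTableau μ) : ℕ := wordEps i (jword T)

/-- The crystal statistic `φ_i` of a semistandard tableau. -/
def phi (i : ℕ) {μ : YoungDiagram} (T : SemistandardYoungTableau μ) : ℕ := wordPhi i (jword T)

/-- The number of entries of `T` equal to `k`. -/
def cnt {μ : YoungDiagram} (T : SemistandardYoungTableau μ) (k : ℕ) : ℕ := (jword T).count k

/-- All entries of `T` lie in the alphabet `{1, …, m}`. -/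
def EntriesIn {μ : YoungDiagram} (T : SemistandardYoungTableau μ) (m : ℕ) : Prop :=
  ∀ i j, (i, j) ∈ μ → 1 ≤ T i j ∧ T i j ≤ m

/-- All entries of `T` are positive integers. -/
def PosEntries {μ : YoungDiagram} (T : SemistandardYoungTableau μ) : Prop :=
  ∀ i j, (i, j) ∈ μ → 1 ≤ T i j

/-- The partition `ν` has all parts even (`ν ∈ 𝒫^{(2)}`). -/
def EvenParts (ν : YoungDiagram) : Prop := ∀ i, Even (ν.rowLen i)

/-- Every part of `δ` occurs with even multiplicity, i.e. `δ_{2i-1} = δ_{2i}` for all `i ≥ 1`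
(`δ ∈ 𝒫^{(1,1)}`). -/
def EvenMult (δ : YoungDiagram) : Prop := ∀ i, δ.rowLen (2 * i) = δ.rowLen (2 * i + 1)

/-- `b` is `μ`-distinguished: there are `ν ∈ 𝒫^{(2)}` and `δ ∈ 𝒫^{(1,1)}` with
`φ(b) = ν - μ` and `ε(b) = δ - μ`, as equalities of weights written in the basis of the
fundamental weights `ω_i` (a partition `κ` having `ω_i`-coefficient `coord κ i`). -/
def Distinguished {lam : YoungDiagram} (b : SemistandardYoungTableau lam)
    (μ : YoungDiagram) : Prop :=
  ∃ ν δ : YoungDiagram, EvenParts ν ∧ EvenMult δ ∧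
    (∀ i, 1 ≤ i → coord ν i = phi i b + coord μ i) ∧
    (∀ i, 1 ≤ i → coord δ i = eps i b + coord μ i)

/-- The coefficient of `ω_i` in `μ_b = Σ_i (φ_{2i}(b) mod 2) ω_{2i}`. -/
def muBcoord {lam : YoungDiagram} (b : SemistandardYoungTableau lam) (i : ℕ) : ℕ :=
  if Even i ∧ 1 ≤ i then phi i b % 2 else 0

/-- The size `|φ(b) + μ_b|` of the weight `φ(b) + μ_b` (a column of height `i`, i.e. the
fundamental weight `ω_i`, contributing `i` boxes). -/
def statB {lam : YoungDiagram} (b : SemistandardYoungTableau lam) : ℕ :=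
  ∑ᶠ i : ℕ, i * (phi i b + muBcoord b i)

/-- `κ ≤_⊞ μ`, i.e. `μ - κ ∈ 𝒫^{⊞} = 𝒫^{(2)} ∩ 𝒫^{(1,1)}`; in terms of the coefficients of
the fundamental weights: the difference `μ - κ` is nonnegative, vanishes in each odd
coordinate, and is even in each coordinate. -/
def leB (κ μ : YoungDiagram) : Prop :=
  ∀ i, 1 ≤ i → coord κ i ≤ coord μ i ∧ (Odd i → coord κ i = coord μ i) ∧
    Even (coord μ i - coord κ i)

/-! ### Auxiliary lemmas -/

lemma rowLen_zero_of_le (μ : YoungDiagram) {i : ℕ} (h : μ.colLen 0 ≤ i) : μ.rowLen i = 0 := by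
  by_contra hne
  have hpos : 0 < μ.rowLen i := Nat.pos_of_ne_zero hne
  have h1 : (i, 0) ∈ μ := YoungDiagram.mem_iff_lt_rowLen.2 hpos
  have := YoungDiagram.mem_iff_lt_colLen.1 h1
  omega

lemma coord_zero_of_big (μ : YoungDiagram) {i : ℕ} (h : μ.colLen 0 + 1 ≤ i) : coord μ i = 0 := by
  unfold coord
  rw [rowLen_zero_of_le μ (by omega), rowLen_zero_of_le μ (by omega)]

lemma rowLen_pred (μ : YoungDiagram) {i : ℕ} (h : 1 ≤ i) :
    μ.rowLen (i - 1) = coord μ i + μ.rowLen i := by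
  have := μ.rowLen_anti (i - 1) i (by omega)
  unfold coord; omega

lemma rowLen_eq_add_sum (μ : YoungDiagram) (k m : ℕ) :
    μ.rowLen k = μ.rowLen (k + m) + ∑ i ∈ Finset.Ico (k + 1) (k + m + 1), coord μ i := by
  induction m with
  | zero => simp
  | succ n ih =>
    rw [show k + (n + 1) + 1 = (k + n + 1) + 1 by ring,
      Finset.sum_Ico_succ_top (by omega)]
    have h2 := rowLen_pred μ (i := k + n + 1) (by omega)
    simp only [Nat.add_sub_cancel] at h2
    rw [show k + (n + 1) = k + n + 1 by ring]
    omega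

lemma rowLen_eq_sum (μ : YoungDiagram) (k N : ℕ) (hk : k ≤ N) (hN : μ.colLen 0 ≤ N) :
    μ.rowLen k = ∑ i ∈ Finset.Ico (k + 1) (N + 1), coord μ i := by
  have h := rowLen_eq_add_sum μ k (N - k)
  rw [show k + (N - k) = N by omega] at h
  rw [h, rowLen_zero_of_le μ hN, Nat.zero_add]

/-- Diagrams with equal coordinates (for `i ≥ 1`) are equal. -/
lemma eq_of_coord_eq (μ ν : YoungDiagram) (h : ∀ i, 1 ≤ i → coord μ i = coord ν i) : μ = ν := by
  have hrow : ∀ k, μ.rowLen k = ν.rowLen k := by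
    intro k
    set N := max (max (μ.colLen 0) (ν.colLen 0)) k with hNdef
    rw [rowLen_eq_sum μ k N (by omega) (by omega), rowLen_eq_sum ν k N (by omega) (by omega)]
    exact Finset.sum_congr rfl fun i hi => h i (by simp [Finset.mem_Ico] at hi; omega)
  ext ⟨i, j⟩
  simp only [YoungDiagram.mem_cells, YoungDiagram.mem_iff_lt_rowLen, hrow]

/-- Tail sums of a coordinate function. -/
def rr (c : ℕ → ℕ) (N k : ℕ) : ℕ := ∑ i ∈ Finset.Ico (k + 1) (N + 1), c i

lemma rr_anti (c : ℕ → ℕ) (N : ℕ) {k l : ℕ} (h : k ≤ l) : rr c N l ≤ rr c N k :=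
  Finset.sum_le_sum_of_subset (Finset.Ico_subset_Ico (by omega) le_rfl)

lemma rr_zero (c : ℕ → ℕ) (N : ℕ) {k : ℕ} (h : N ≤ k) : rr c N k = 0 := by
  unfold rr
  rw [Finset.Ico_eq_empty (by omega), Finset.sum_empty]

lemma rr_succ (c : ℕ → ℕ) (N : ℕ) {k : ℕ} (h : k < N) :
    rr c N k = c (k + 1) + rr c N (k + 1) := by
  unfold rr
  rw [Finset.sum_eq_sum_Ico_succ_bot (by omega)]

/-- The Young diagram with prescribed coordinates `c` (supported below `N`). -/
def ofCoords (c : ℕ → ℕ) (N : ℕ) : YoungDiagram where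
  cells := (Finset.range (N + 1) ×ˢ Finset.range (rr c N 0 + 1)).filter
    fun p => p.2 < rr c N p.1
  isLowerSet := by
    rintro ⟨i1, j1⟩ ⟨i2, j2⟩ ⟨hi, hj⟩ hx
    simp only [Finset.coe_filter, Set.mem_setOf_eq, Finset.mem_product, Finset.mem_range] at hx ⊢
    refine ⟨⟨by omega, by omega⟩, ?_⟩
    have := rr_anti c N (k := i2) (l := i1) hi
    omega

lemma mem_ofCoords (c : ℕ → ℕ) (N : ℕ) (i j : ℕ) :
    (i, j) ∈ ofCoords c N ↔ j < rr c N i := by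
  show (i, j) ∈ Finset.filter _ _ ↔ _
  simp only [Finset.mem_filter, Finset.mem_product, Finset.mem_range]
  constructor
  · rintro ⟨_, h⟩; exact h
  · intro h
    have h1 : ¬ N ≤ i := fun hN => by have := rr_zero c N hN; omega
    have h2 := rr_anti c N (k := 0) (l := i) (by omega)
    exact ⟨⟨by omega, by omega⟩, h⟩

lemma rowLen_ofCoords (c : ℕ → ℕ) (N : ℕ) (k : ℕ) : (ofCoords c N).rowLen k = rr c N k := by
  have h : ∀ j, j < (ofCoords c N).rowLen k ↔ j < rr c N k := fun j => by
    rw [← YoungDiagram.mem_iff_lt_rowLen, mem_ofCoords]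
  have h1 := h ((ofCoords c N).rowLen k)
  have h2 := h (rr c N k)
  omega

lemma coord_ofCoords (c : ℕ → ℕ) (N : ℕ) (hc : ∀ i, N ≤ i → c i = 0) (i : ℕ) (hi : 1 ≤ i) :
    coord (ofCoords c N) i = c i := by
  unfold coord
  rw [rowLen_ofCoords, rowLen_ofCoords]
  rcases Nat.lt_or_ge (i - 1) N with h | h
  · have h2 := rr_succ c N h
    rw [show i - 1 + 1 = i by omega] at h2
    omega
  · rw [rr_zero c N (by omega), rr_zero c N (by omega), hc i (by omega)]

lemma evenParts_ofCoords (c : ℕ → ℕ) (N : ℕ) (h : ∀ i, c i % 2 = 0) :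
    EvenParts (ofCoords c N) := by
  intro k
  rw [rowLen_ofCoords, Nat.even_iff]
  unfold rr
  rw [Finset.sum_nat_mod]
  simp only [Finset.sum_congr rfl fun i (_ : i ∈ _) => h i]
  simp

lemma evenMult_ofCoords (c : ℕ → ℕ) (N : ℕ) (h : ∀ i, Odd i → c i = 0) :
    EvenMult (ofCoords c N) := by
  intro k
  rw [rowLen_ofCoords, rowLen_ofCoords]
  rcases Nat.lt_or_ge (2 * k) N with hlt | hge
  · rw [rr_succ c N hlt, h (2 * k + 1) ⟨k, by ring⟩, Nat.zero_add]
  · rw [rr_zero c N (by omega), rr_zero c N (by omega)]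

lemma even_coord_of_evenParts (ν : YoungDiagram) (hν : EvenParts ν) (i : ℕ) (hi : 1 ≤ i) :
    coord ν i % 2 = 0 := by
  have h1 := hν (i - 1)
  have h2 := hν i
  have h3 := ν.rowLen_anti (i - 1) i (by omega)
  rw [Nat.even_iff] at h1 h2
  unfold coord
  omega

lemma coord_odd_zero_of_evenMult (δ : YoungDiagram) (hδ : EvenMult δ) (i : ℕ) (hi : 1 ≤ i)
    (ho : Odd i) : coord δ i = 0 := by
  obtain ⟨k, hk⟩ := ho
  have h1 := hδ k
  have h3 := δ.rowLen_anti (i - 1) i (by omega)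
  unfold coord
  rw [show i - 1 = 2 * k by omega, show i = 2 * k + 1 by omega, h1]
  omega

lemma wordPhi_eq_zero {i : ℕ} {w : List ℕ} (h : w.count i = 0) : wordPhi i w = 0 := by
  refine Nat.le_zero.mp (Finset.sup_le fun k _ => ?_)
  have := (List.drop_sublist k w).count_le i
  omega

lemma wordEps_eq_zero {i : ℕ} {w : List ℕ} (h : w.count (i + 1) = 0) : wordEps i w = 0 := by
  refine Nat.le_zero.mp (Finset.sup_le fun k _ => ?_)
  have := (List.take_sublist k w).count_le (i + 1)
  omega

lemma phi_eq_zero {lam : YoungDiagram} (b : SemistandardYoungTableau lam) {i : ℕ}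
    (h : (jword b).sum + 1 ≤ i) : phi i b = 0 := by
  apply wordPhi_eq_zero
  rw [List.count_eq_zero]
  intro hm
  have := List.le_sum_of_mem hm
  omega

lemma eps_eq_zero {lam : YoungDiagram} (b : SemistandardYoungTableau lam) {i : ℕ}
    (h : (jword b).sum + 1 ≤ i) : eps i b = 0 := by
  apply wordEps_eq_zero
  rw [List.count_eq_zero]
  intro hm
  have := List.le_sum_of_mem hm
  omega


/-- If the set `S_b = {μ : b is μ-distinguished}` is nonempty, then it has a
unique minimal element `μ_b` for the order `≤_⊞`, `S_b = μ_b + 𝒫^{⊞}`, and for any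
`μ ∈ S_b` one has `μ_b = μ^{⊞}` (where `μ^{⊞}` keeps the odd coordinates of `μ` and reduces
the even ones mod `2`, in the basis of the fundamental weights). -/
theorem distinguished_minimal_mu (lam : YoungDiagram) (b : SemistandardYoungTableau lam)
    (hpos : PosEntries b) (hne : ∃ μ : YoungDiagram, Distinguished b μ) :
    ∃! μb : YoungDiagram,
      Distinguished b μb ∧
      (∀ μ : YoungDiagram, Distinguished b μ ↔ leB μb μ) ∧
      (∀ μ : YoungDiagram, Distinguished b μ →
        ∀ i, 1 ≤ i → coord μb i = if Odd i then coord μ i else coord μ i % 2) := by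
  classical
  obtain ⟨μ0, hμ0⟩ := hne
  set N : ℕ := (jword b).sum + 1 with hNdef
  have hphiN : ∀ i, N ≤ i → phi i b = 0 := fun i hi => phi_eq_zero b hi
  have hepsN : ∀ i, N ≤ i → eps i b = 0 := fun i hi => eps_eq_zero b hi
  -- facts derivable from any witness of distinguishedness
  have hfacts : ∀ μ : YoungDiagram, Distinguished b μ →
      (∀ i, 1 ≤ i → Odd i → eps i b = 0 ∧ coord μ i = 0) ∧
      (∀ i, 1 ≤ i → (phi i b + coord μ i) % 2 = 0) := by
    rintro μ ⟨ν, δ, hν, hδ, hφ, hε⟩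
    constructor
    · intro i hi ho
      have h1 : coord δ i = 0 := coord_odd_zero_of_evenMult δ hδ i hi ho
      have h2 := hε i hi
      omega
    · intro i hi
      have h1 := even_coord_of_evenParts ν hν i hi
      have h2 := hφ i hi
      omega
  have hepsodd : ∀ i, 1 ≤ i → Odd i → eps i b = 0 :=
    fun i hi ho => ((hfacts μ0 hμ0).1 i hi ho).1
  have hphiodd : ∀ i, 1 ≤ i → Odd i → phi i b % 2 = 0 := by
    intro i hi ho
    have h1 := ((hfacts μ0 hμ0).1 i hi ho).2
    have h2 := (hfacts μ0 hμ0).2 i hi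
    omega
  have hmuBN : ∀ i, N ≤ i → muBcoord b i = 0 := by
    intro i hi
    unfold muBcoord
    rw [hphiN i hi]
    simp
  set μb : YoungDiagram := ofCoords (muBcoord b) N with hμbdef
  have hcoordμb : ∀ i, 1 ≤ i → coord μb i = muBcoord b i :=
    fun i hi => coord_ofCoords _ _ hmuBN i hi
  have hmuB_odd : ∀ i, Odd i → muBcoord b i = 0 := by
    intro i hi
    unfold muBcoord
    rw [if_neg]
    rw [Nat.odd_iff] at hi
    rintro ⟨h1, h2⟩
    rw [Nat.even_iff] at h1
    omega
  have hmuB_even : ∀ i, 1 ≤ i → Even i → muBcoord b i = phi i b % 2 := by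
    intro i hi he
    unfold muBcoord
    rw [if_pos ⟨he, hi⟩]
  -- the key equivalence
  have hkey : ∀ μ : YoungDiagram, Distinguished b μ ↔ leB μb μ := by
    intro μ
    constructor
    · intro hd i hi
      have hcb := hcoordμb i hi
      rcases Nat.even_or_odd i with he | ho
      · have h2 := (hfacts μ hd).2 i hi
        rw [hmuB_even i hi he] at hcb
        refine ⟨by omega, ?_, ?_⟩
        · intro ho
          rw [Nat.odd_iff] at ho
          rw [Nat.even_iff] at he
          omega
        · rw [Nat.even_iff]
          omega
      · have h1 := ((hfacts μ hd).1 i hi ho).2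
        rw [hmuB_odd i ho] at hcb
        refine ⟨by omega, fun _ => by omega, ?_⟩
        rw [Nat.even_iff]
        omega
    · intro hle
      set M : ℕ := max N (μ.colLen 0 + 1) with hMdef
      have hcμM : ∀ i, M ≤ i → coord μ i = 0 :=
        fun i hi => coord_zero_of_big μ (by omega)
      -- facts about coordinates of μ
      have hcμodd : ∀ i, 1 ≤ i → Odd i → coord μ i = 0 := by
        intro i hi ho
        have h1 := (hle i hi).2.1 ho
        rw [hcoordμb i hi, hmuB_odd i ho] at h1
        omega
      have hcμeven : ∀ i, 1 ≤ i → (phi i b + coord μ i) % 2 = 0 := by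
        intro i hi
        rcases Nat.even_or_odd i with he | ho
        · have h1 := (hle i hi).1
          have h2 := (hle i hi).2.2
          rw [hcoordμb i hi, hmuB_even i hi he] at h1 h2
          rw [Nat.even_iff] at h2
          omega
        · have := hphiodd i hi ho
          rw [hcμodd i hi ho]
          omega
      refine ⟨ofCoords (fun j => if 1 ≤ j then phi j b + coord μ j else 0) M,
        ofCoords (fun j => if 1 ≤ j then eps j b + coord μ j else 0) M, ?_, ?_, ?_, ?_⟩
      · apply evenParts_ofCoords
        intro i
        rcases Nat.lt_or_ge i 1 with h | h
        · rw [if_neg (by omega)]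
        · rw [if_pos h]
          exact hcμeven i h
      · apply evenMult_ofCoords
        intro i ho
        have hi : 1 ≤ i := by rw [Nat.odd_iff] at ho; omega
        rw [if_pos hi, hepsodd i hi ho, hcμodd i hi ho]
      · intro i hi
        rw [coord_ofCoords _ M (fun j hj => by
            rcases Nat.lt_or_ge j 1 with h | h
            · rw [if_neg (by omega)]
            · rw [if_pos h, hphiN j (by omega), hcμM j hj]) i hi, if_pos hi]
      · intro i hi
        rw [coord_ofCoords _ M (fun j hj => by
            rcases Nat.lt_or_ge j 1 with h | h
            · rw [if_neg (by omega)]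
            · rw [if_pos h, hepsN j (by omega), hcμM j hj]) i hi, if_pos hi]
  have hdb : Distinguished b μb := by
    rw [hkey μb]
    intro i hi
    exact ⟨le_rfl, fun _ => rfl, by simp⟩
  have hp3 : ∀ μ : YoungDiagram, Distinguished b μ →
      ∀ i, 1 ≤ i → coord μb i = if Odd i then coord μ i else coord μ i % 2 := by
    intro μ hd i hi
    rcases Nat.even_or_odd i with he | ho
    · rw [if_neg (by rw [Nat.odd_iff]; rw [Nat.even_iff] at he; omega)]
      have h2 := (hfacts μ hd).2 i hi
      rw [hcoordμb i hi, hmuB_even i hi he]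
      omega
    · rw [if_pos ho, hcoordμb i hi, hmuB_odd i ho, ((hfacts μ hd).1 i hi ho).2]
  refine ⟨μb, ⟨hdb, hkey, hp3⟩, ?_⟩
  rintro μb' ⟨hd', hiff', hp3'⟩
  apply eq_of_coord_eq
  intro i hi
  have h := hp3' μb hdb i hi
  rcases Nat.even_or_odd i with he | ho
  · rw [if_neg (by rw [Nat.odd_iff]; rw [Nat.even_iff] at he; omega)] at h
    have hcb := hcoordμb i hi
    rw [hmuB_even i hi he] at hcb
    omega
  · rwa [if_pos ho] at h


end GE
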